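/- For a density operator ρ, a positive semidefinite operator σ, and real numbers a < b, the differences of error probabilities satisfy e^{a}(β(a) − β(b)) ≤ α(b) − α(a) ≤ e^{b}(β(a) − β(b)), where α(x) = 1 − Tr(ρ S(x)), β(x) = Tr(σ S(x)), and S(x) is the projection onto the positive spectral subspace of ρ − e^{x}σ. -/

import Mathlib

open scoped ComplexOrder

/-- The spectral projection of a matrix onto the direct sum of its eigenspaces
corresponding to strictly positive eigenvalues (defined to be `0` if the matrix
is not Hermitian). -/
noncomputable def posProj {m : Type*} [Fintype m] [DecidableEq m]
    (A : Matrix m m ℂ) : Matrix m m ℂ :=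
  if hA : A.IsHermitian then
    (hA.eigenvectorUnitary : Matrix m m ℂ) *
      Matrix.diagonal (fun i => if 0 < hA.eigenvalues i then (1 : ℂ) else 0) *
      star (hA.eigenvectorUnitary : Matrix m m ℂ)
  else 0

section auxLemmas

set_option linter.unusedSectionVars false

variable {m : Type*} [Fintype m] [DecidableEq m] {A B : Matrix m m ℂ}

private lemma psd_trace_nonneg (hA : A.PosSemidef) : 0 ≤ A.trace.re := by
  have h : ∀ i, 0 ≤ A i i := by
    intro i
    exact hA.diag_nonneg
  rw [Matrix.trace]
  simp only [Complex.re_sum]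
  exact Finset.sum_nonneg fun i _ => (Complex.nonneg_iff.mp (h i)).1

open scoped MatrixOrder in
private lemma psd_trace_mul_nonneg (hA : A.PosSemidef) (hB : B.PosSemidef) :
    0 ≤ (A * B).trace.re := by
  have h2 : (A * B).trace = (CFC.sqrt A * B * CFC.sqrt A).trace := by
    conv_lhs => rw [← CFC.sqrt_mul_sqrt_self A hA.nonneg]
    rw [Matrix.mul_assoc, Matrix.trace_mul_comm]
  rw [h2]
  have := hB.mul_mul_conjTranspose_same (CFC.sqrt A)
  rw [(Matrix.nonneg_iff_posSemidef.mp (CFC.sqrt_nonneg A)).1] at this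
  exact psd_trace_nonneg this

private lemma diag_psd (f : m → ℝ) (hf : ∀ i, 0 ≤ f i) :
    (Matrix.diagonal (fun i => (f i : ℂ))).PosSemidef :=
  Matrix.posSemidef_diagonal_iff.mpr fun i => Complex.zero_le_real.mpr (hf i)

private lemma conj_psd {D : Matrix m m ℂ} (hD : D.PosSemidef) (U : Matrix m m ℂ) :
    (U * D * star U).PosSemidef := by
  simpa [Matrix.star_eq_conjTranspose] using hD.mul_mul_conjTranspose_same U

private lemma posProj_psd (hA : A.IsHermitian) : (posProj A).PosSemidef := by
  rw [posProj, dif_pos hA]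
  have h : (fun i => if 0 < hA.eigenvalues i then (1 : ℂ) else 0)
      = fun i => ((if 0 < hA.eigenvalues i then (1 : ℝ) else 0 : ℝ) : ℂ) := by
    funext i; split_ifs <;> norm_num
  rw [h]
  exact conj_psd (diag_psd _ fun i => by split_ifs <;> norm_num) _

private lemma one_sub_posProj_psd (hA : A.IsHermitian) : (1 - posProj A).PosSemidef := by
  rw [posProj, dif_pos hA]
  have hU : (hA.eigenvectorUnitary : Matrix m m ℂ) * star (hA.eigenvectorUnitary : Matrix m m ℂ) = 1 :=
    Matrix.mem_unitaryGroup_iff.mp hA.eigenvectorUnitary.2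
  have key : 1 - (hA.eigenvectorUnitary : Matrix m m ℂ) *
        Matrix.diagonal (fun i => if 0 < hA.eigenvalues i then (1 : ℂ) else 0) *
        star (hA.eigenvectorUnitary : Matrix m m ℂ)
      = (hA.eigenvectorUnitary : Matrix m m ℂ) *
        Matrix.diagonal (fun i => ((if 0 < hA.eigenvalues i then (0 : ℝ) else 1 : ℝ) : ℂ)) *
        star (hA.eigenvectorUnitary : Matrix m m ℂ) := by
    have h1 : (1 : Matrix m m ℂ) = (hA.eigenvectorUnitary : Matrix m m ℂ) * 1 *
        star (hA.eigenvectorUnitary : Matrix m m ℂ) := by rw [Matrix.mul_one, hU]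
    rw [h1, ← Matrix.sub_mul, ← Matrix.mul_sub, ← Matrix.diagonal_one, Matrix.diagonal_sub]
    have h2 : (fun i => (1:ℂ) - if 0 < hA.eigenvalues i then (1 : ℂ) else 0)
        = fun i => ((if 0 < hA.eigenvalues i then (0 : ℝ) else 1 : ℝ) : ℂ) := by
      funext i; split_ifs <;> norm_num
    rw [h2]
  rw [key]
  exact conj_psd (diag_psd _ fun i => by split_ifs <;> norm_num) _

private lemma conj_mul_conj (U D E : Matrix m m ℂ) (hU : star U * U = 1) :
    (U * D * star U) * (U * E * star U) = U * (D * E) * star U := by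
  simp only [Matrix.mul_assoc]
  rw [← Matrix.mul_assoc (star U) U (E * star U), hU, Matrix.one_mul]

private lemma mul_posProj_eq (hA : A.IsHermitian) :
    A * posProj A = (hA.eigenvectorUnitary : Matrix m m ℂ) *
      Matrix.diagonal (fun i => ((max (hA.eigenvalues i) 0 : ℝ) : ℂ)) *
      star (hA.eigenvectorUnitary : Matrix m m ℂ) := by
  have hU : star (hA.eigenvectorUnitary : Matrix m m ℂ) * (hA.eigenvectorUnitary : Matrix m m ℂ) = 1 :=
    Matrix.mem_unitaryGroup_iff'.mp hA.eigenvectorUnitary.2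
  have h1 : A * posProj A = ((hA.eigenvectorUnitary : Matrix m m ℂ) *
      Matrix.diagonal (Complex.ofReal ∘ hA.eigenvalues) * star (hA.eigenvectorUnitary : Matrix m m ℂ)) *
      posProj A := congrArg (· * posProj A) hA.spectral_theorem
  rw [h1, posProj, dif_pos hA, conj_mul_conj _ _ _ hU, Matrix.diagonal_mul_diagonal]
  have h2 : (fun i => (Complex.ofReal ∘ hA.eigenvalues) i * if 0 < hA.eigenvalues i then (1:ℂ) else 0)
      = fun i => ((max (hA.eigenvalues i) 0 : ℝ) : ℂ) := by
    funext i
    simp only [Function.comp_apply]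
    split_ifs with h
    · simp [max_eq_left h.le]
    · simp [max_eq_right (not_lt.mp h)]
  rw [h2]

private lemma mul_posProj_sub_psd (hA : A.IsHermitian) : (A * posProj A - A).PosSemidef := by
  have key : A * posProj A - A = (hA.eigenvectorUnitary : Matrix m m ℂ) *
      Matrix.diagonal (fun i => ((max (hA.eigenvalues i) 0 - hA.eigenvalues i : ℝ) : ℂ)) *
      star (hA.eigenvectorUnitary : Matrix m m ℂ) := by
    have h1 : A * posProj A - A = (hA.eigenvectorUnitary : Matrix m m ℂ) *
        Matrix.diagonal (fun i => ((max (hA.eigenvalues i) 0 : ℝ) : ℂ)) *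
        star (hA.eigenvectorUnitary : Matrix m m ℂ) -
        ((hA.eigenvectorUnitary : Matrix m m ℂ) *
        Matrix.diagonal (Complex.ofReal ∘ hA.eigenvalues) *
        star (hA.eigenvectorUnitary : Matrix m m ℂ)) := by
      rw [← mul_posProj_eq hA]
      exact congrArg (A * posProj A - ·) hA.spectral_theorem
    rw [h1, ← Matrix.sub_mul, ← Matrix.mul_sub, Matrix.diagonal_sub]
    have h2 : (fun i => ((max (hA.eigenvalues i) 0 : ℝ) : ℂ) - (Complex.ofReal ∘ hA.eigenvalues) i)
        = fun i => ((max (hA.eigenvalues i) 0 - hA.eigenvalues i : ℝ) : ℂ) := by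
      funext i
      push_cast
      simp [Function.comp_apply]
    rw [h2]
  rw [key]
  exact conj_psd (diag_psd _ fun i => by simp [sub_nonneg, le_max_left]) _

private lemma mul_posProj_psd (hA : A.IsHermitian) : (A * posProj A).PosSemidef := by
  rw [mul_posProj_eq hA]
  exact conj_psd (diag_psd _ fun i => le_max_right _ _) _

private lemma trace_mul_le_posProj (hA : A.IsHermitian) (hB : B.PosSemidef)
    (hB1 : (1 - B).PosSemidef) : (A * B).trace.re ≤ (A * posProj A).trace.re := by
  have h1 : 0 ≤ ((A * posProj A - A) * B).trace.re :=
    psd_trace_mul_nonneg (mul_posProj_sub_psd hA) hB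
  have h2 : 0 ≤ ((A * posProj A) * (1 - B)).trace.re :=
    psd_trace_mul_nonneg (mul_posProj_psd hA) hB1
  rw [Matrix.sub_mul, Matrix.trace_sub, Complex.sub_re] at h1
  rw [Matrix.mul_sub, Matrix.mul_one, Matrix.trace_sub, Complex.sub_re] at h2
  linarith

end auxLemmas

/-- For `a < b`:
`e^a (β(a) − β(b)) ≤ α(b) − α(a) ≤ e^b (β(a) − β(b))`, where
`α(x) = 1 − Tr(ρ S(x))`, `β(x) = Tr(σ S(x))`, `S(x) = {ρ − e^x σ > 0}`. -/
theorem likelihood_error_difference_bounds {m : Type*} [Fintype m] [DecidableEq m]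
    (ρ σ : Matrix m m ℂ) (hρ : ρ.PosSemidef) (hρ1 : ρ.trace = 1)
    (hσ : σ.PosSemidef) (a b : ℝ) (hab : a < b) :
    Real.exp a * ((σ * posProj (ρ - (Real.exp a : ℂ) • σ)).trace.re -
          (σ * posProj (ρ - (Real.exp b : ℂ) • σ)).trace.re) ≤
        (1 - (ρ * posProj (ρ - (Real.exp b : ℂ) • σ)).trace.re) -
          (1 - (ρ * posProj (ρ - (Real.exp a : ℂ) • σ)).trace.re) ∧
      (1 - (ρ * posProj (ρ - (Real.exp b : ℂ) • σ)).trace.re) -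
          (1 - (ρ * posProj (ρ - (Real.exp a : ℂ) • σ)).trace.re) ≤
        Real.exp b * ((σ * posProj (ρ - (Real.exp a : ℂ) • σ)).trace.re -
          (σ * posProj (ρ - (Real.exp b : ℂ) • σ)).trace.re) := by
  have hH : ∀ x : ℝ, (ρ - (Real.exp x : ℂ) • σ).IsHermitian := by
    intro x
    rw [Matrix.IsHermitian, Matrix.conjTranspose_sub, Matrix.conjTranspose_smul, hρ.1, hσ.1]
    simp [Complex.star_def, ← Complex.ofReal_exp, Complex.conj_ofReal]
  have h1 := trace_mul_le_posProj (hH a) (posProj_psd (hH b)) (one_sub_posProj_psd (hH b))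
  have h2 := trace_mul_le_posProj (hH b) (posProj_psd (hH a)) (one_sub_posProj_psd (hH a))
  simp only [Matrix.sub_mul, Matrix.smul_mul, Matrix.trace_sub, Matrix.trace_smul,
    Complex.sub_re, Complex.real_smul, Complex.re_ofReal_mul, smul_eq_mul] at h1 h2
  constructor <;> nlinarith [h1, h2]
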